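/- arXiv:2305.15394 — 5 statements merged into one kernel-verified Lean document; each statement's English description precedes it below -/
import Mathlib

section
/- If a randomized algorithm M adds Laplace noise with scale Δf/ε independently to each coordinate of a function f: D → ℝ^k, where Δf is the ℓ1-sensitivity of f over neighboring datasets, then M satisfies ε-differential privacy: for all neighboring datasets D, D' and all measurable sets S, Pr[M(D) ∈ S] ≤ e^ε · Pr[M(D') ∈ S]. -/
open MeasureTheory

/-- Two histogram-datasets over a finite universe are neighboring if their ℓ1 distance is at
most 1 (they differ in one element). -/
def Neighbor {X : Type*} [Fintype X] (D D' : X → ℕ) : Prop :=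
  ∑ x, |(D x : ℤ) - (D' x : ℤ)| ≤ 1

open ENNReal in
lemma lintegral_fin_prod_aux {n : ℕ} (f : Fin n → ℝ → ℝ≥0∞) (hf : ∀ i, Measurable (f i)) :
    ∫⁻ x : Fin n → ℝ, ∏ i, f i (x i) ∂(Measure.pi fun _ => (volume : Measure ℝ)) =
      ∏ i, ∫⁻ y, f i y := by
  induction n with
  | zero => simp
  | succ n ih =>
    have hmp := (measurePreserving_piFinSuccAbove
      (fun _ : Fin (n+1) => (volume : Measure ℝ)) 0).symm
    rw [← hmp.lintegral_comp (by fun_prop)]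
    simp only [MeasurableEquiv.piFinSuccAbove_symm_apply, Fin.insertNthEquiv,
      Fin.prod_univ_succ, Fin.insertNth_zero, Equiv.coe_fn_mk, Fin.cons_succ,
      Fin.zero_succAbove, cast_eq, Fin.cons_zero]
    rw [lintegral_prod_mul (f := f 0) (g := fun y : Fin n → ℝ => ∏ x : Fin n, f x.succ (y x))
      (hf 0).aemeasurable
      (Finset.measurable_prod Finset.univ
        (fun i _ => (hf i.succ).comp (measurable_pi_apply i))).aemeasurable]
    rw [ih (fun i => f i.succ) (fun i => hf i.succ)]

open ENNReal in
lemma pi_withDensity_aux {n : ℕ} (g : Fin n → ℝ → ℝ≥0∞) (hg : ∀ i, Measurable (g i))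
    [∀ i, SigmaFinite ((volume : Measure ℝ).withDensity (g i))] :
    Measure.pi (fun i => (volume : Measure ℝ).withDensity (g i)) =
      (Measure.pi fun _ => (volume : Measure ℝ)).withDensity (fun x => ∏ i, g i (x i)) := by
  refine Measure.pi_eq fun s hs => ?_
  rw [withDensity_apply _ (MeasurableSet.univ_pi hs),
    ← lintegral_indicator (MeasurableSet.univ_pi hs)]
  have heq : (Set.pi Set.univ s).indicator (fun x => ∏ i, g i (x i)) =
      fun x => ∏ i, (s i).indicator (g i) (x i) := by
    funext x
    by_cases hx : x ∈ Set.pi Set.univ s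
    · rw [Set.indicator_of_mem hx]
      exact Finset.prod_congr rfl fun i _ =>
        (Set.indicator_of_mem (hx i (Set.mem_univ i)) _).symm
    · rw [Set.indicator_of_notMem hx]
      have : ∃ i, x i ∉ s i := by
        by_contra h
        push_neg at h
        exact hx fun i _ => h i
      obtain ⟨i, hi⟩ := this
      exact (Finset.prod_eq_zero (Finset.mem_univ i)
        (Set.indicator_of_notMem hi _)).symm
  rw [heq, lintegral_fin_prod_aux _ (fun i => (hg i).indicator (hs i))]
  exact Finset.prod_congr rfl fun i _ => by
    rw [lintegral_indicator (hs i), withDensity_apply _ (hs i)]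

/-- The Laplace mechanism: adding independent Laplace noise with scale `Δ/ε` to every
coordinate of a query `f` with ℓ1-sensitivity `Δ` satisfies `ε`-differential privacy. -/
theorem laplace_mechanism_dp {X : Type*} [Fintype X] (k : ℕ)
    (f : (X → ℕ) → (Fin k → ℝ)) (ε Δ : ℝ) (hε : 0 < ε) (hΔ : 0 < Δ)
    (hsens : ∀ D D', Neighbor D D' → ∑ i, |f D i - f D' i| ≤ Δ)
    (M : (X → ℕ) → Measure (Fin k → ℝ))
    (hM : ∀ D, M D = Measure.pi fun i =>
      volume.withDensity fun x =>
        ENNReal.ofReal ((ε / (2 * Δ)) * Real.exp (-(|x - f D i| * ε / Δ)))) :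
    ∀ D D', Neighbor D D' → ∀ S : Set (Fin k → ℝ), MeasurableSet S →
      M D S ≤ ENNReal.ofReal (Real.exp ε) * M D' S := by
  intro D D' hN S hS
  have hc : (0:ℝ) < ε / (2 * Δ) := by positivity
  have hmeas : ∀ (a : Fin k → ℝ), ∀ i : Fin k, Measurable fun x : ℝ =>
      ENNReal.ofReal ((ε / (2 * Δ)) * Real.exp (-(|x - a i| * ε / Δ))) := by
    intro a i; fun_prop
  rw [hM D, hM D', pi_withDensity_aux _ (hmeas (f D)), pi_withDensity_aux _ (hmeas (f D')),
    withDensity_apply _ hS, withDensity_apply _ hS,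
    ← lintegral_const_mul' _ _ ENNReal.ofReal_ne_top]
  refine setLIntegral_mono' hS fun x _ => ?_
  -- pointwise density ratio bound
  have hterm : ∀ (a : Fin k → ℝ) i, (0:ℝ) ≤ ε / (2 * Δ) * Real.exp (-(|x i - a i| * ε / Δ)) :=
    fun a i => by positivity
  rw [← ENNReal.ofReal_prod_of_nonneg (fun i _ => hterm (f D) i),
    ← ENNReal.ofReal_prod_of_nonneg (fun i _ => hterm (f D') i),
    ← ENNReal.ofReal_mul (Real.exp_nonneg ε)]
  apply ENNReal.ofReal_le_ofReal
  rw [Finset.prod_mul_distrib, Finset.prod_mul_distrib, Finset.prod_const,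
    ← Real.exp_sum, ← Real.exp_sum, mul_comm (Real.exp ε), mul_assoc]
  refine mul_le_mul_of_nonneg_left ?_ (pow_nonneg hc.le _)
  rw [← Real.exp_add]
  apply Real.exp_le_exp.2
  have htri : ∀ i, |x i - f D' i| - |x i - f D i| ≤ |f D i - f D' i| := by
    intro i
    have := abs_sub_abs_le_abs_sub (x i - f D' i) (x i - f D i)
    have h2 : |x i - f D' i - (x i - f D i)| = |f D i - f D' i| := by
      rw [show x i - f D' i - (x i - f D i) = f D i - f D' i by ring]
    linarith [this, h2.le]
  have hsum : (∑ i, |x i - f D' i|) - ∑ i, |x i - f D i| ≤ Δ := by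
    calc (∑ i, |x i - f D' i|) - ∑ i, |x i - f D i|
        = ∑ i, (|x i - f D' i| - |x i - f D i|) := by rw [Finset.sum_sub_distrib]
      _ ≤ ∑ i, |f D i - f D' i| := Finset.sum_le_sum fun i _ => htri i
      _ ≤ Δ := hsens D D' hN
  have hsumA : ∀ (a : Fin k → ℝ), ∑ i, -(|x i - a i| * ε / Δ)
      = -((∑ i, |x i - a i|) * (ε / Δ)) := by
    intro a
    rw [Finset.sum_mul, ← Finset.sum_neg_distrib]
    exact Finset.sum_congr rfl fun i _ => by ring
  rw [hsumA (f D), hsumA (f D')]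
  have hr : (0:ℝ) < ε / Δ := by positivity
  have hΔr : Δ * (ε / Δ) = ε := by field_simp
  nlinarith [mul_le_mul_of_nonneg_right hsum hr.le]
end

section
/- The two-sided geometric mechanism, which to an integer-valued query f of sensitivity 1 adds integer noise δ drawn with probability Pr[y = δ] = ((1−α)/(1+α))·α^{|δ|} for parameter α = e^{−ε}, satisfies ε-differential privacy. -/
/-- The two-sided geometric mechanism: adding integer noise `δ` with probability
`((1-α)/(1+α))·α^{|δ|}` for `α = e^{-ε}` to an integer-valued query of sensitivity 1
satisfies `ε`-differential privacy. -/
theorem geometric_mechanism_dp {X : Type*} [Fintype X]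
    (f : (X → ℕ) → ℤ) (ε : ℝ) (hε : 0 < ε)
    (hsens : ∀ D D', Neighbor D D' → |f D - f D'| ≤ 1)
    (M : (X → ℕ) → PMF ℤ)
    (hM : ∀ D t, M D t = ENNReal.ofReal
      (((1 - Real.exp (-ε)) / (1 + Real.exp (-ε))) *
        Real.exp (-ε) ^ (t - f D).natAbs)) :
    ∀ D D', Neighbor D D' → ∀ t : ℤ,
      M D t ≤ ENNReal.ofReal (Real.exp ε) * M D' t := by
  intro D D' hnb t
  rw [hM, hM, ← ENNReal.ofReal_mul (Real.exp_pos ε).le]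
  apply ENNReal.ofReal_le_ofReal
  set α := Real.exp (-ε) with hα
  have hα0 : 0 < α := Real.exp_pos _
  have hα1 : α ≤ 1 := by
    rw [hα]
    exact Real.exp_le_one_iff.mpr (by linarith)
  have hc : 0 ≤ (1 - α) / (1 + α) := div_nonneg (by linarith) (by linarith)
  set n := (t - f D).natAbs
  set m := (t - f D').natAbs
  have hsens' : (f D - f D').natAbs ≤ 1 := by
    have h := hsens D D' hnb
    rw [Int.abs_eq_natAbs] at h
    omega
  have hmn : m ≤ n + 1 := by
    have : t - f D' = (t - f D) + (f D - f D') := by ring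
    simp only [m, n, this]
    calc ((t - f D) + (f D - f D')).natAbs ≤ (t - f D).natAbs + (f D - f D').natAbs :=
          Int.natAbs_add_le _ _
      _ ≤ (t - f D).natAbs + 1 := by omega
  have key : α ^ n ≤ Real.exp ε * α ^ m := by
    rw [hα, ← Real.exp_nat_mul, ← Real.exp_nat_mul, ← Real.exp_add, Real.exp_le_exp]
    have : (m : ℝ) ≤ n + 1 := by exact_mod_cast hmn
    nlinarith
  calc (1 - α) / (1 + α) * α ^ n ≤ (1 - α) / (1 + α) * (Real.exp ε * α ^ m) := by
        exact mul_le_mul_of_nonneg_left key hc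
    _ = Real.exp ε * ((1 - α) / (1 + α) * α ^ m) := by ring
end

section
/- The exponential mechanism, which outputs element t ∈ R with probability proportional to exp(ε·u(D,t)/(2Δu))·μ(t), where Δu is the sensitivity of the utility function u, satisfies ε-differential privacy. -/
/-- The exponential mechanism, which outputs `t ∈ R` with probability proportional to
`exp(ε·u(D,t)/(2Δu))·μ(t)` where `Δu` is the sensitivity of the utility `u`,
satisfies `ε`-differential privacy. -/
theorem exponential_mechanism_dp {X R : Type*} [Fintype X] [Fintype R] [Nonempty R]
    (u : (X → ℕ) → R → ℝ) (μ : R → ℝ) (hμ : ∀ t, 0 < μ t)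
    (ε Δu : ℝ) (hε : 0 < ε) (hΔ : 0 < Δu)
    (hsens : ∀ r D D', Neighbor D D' → |u D r - u D' r| ≤ Δu)
    (P : (X → ℕ) → R → ℝ)
    (hP : ∀ D t, P D t = Real.exp (ε * u D t / (2 * Δu)) * μ t /
      ∑ r, Real.exp (ε * u D r / (2 * Δu)) * μ r) :
    ∀ D D', Neighbor D D' → ∀ t, P D t ≤ Real.exp ε * P D' t := by
  intro D D' hN t
  set S : ((X → ℕ)) → ℝ := fun E => ∑ r, Real.exp (ε * u E r / (2 * Δu)) * μ r with hS
  have hSpos : ∀ E, 0 < S E := fun E =>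
    Finset.sum_pos (fun r _ => mul_pos (Real.exp_pos _) (hμ r)) Finset.univ_nonempty
  -- pointwise exponent comparison
  have key : ∀ (E E' : (X → ℕ)), Neighbor E E' → ∀ r,
      Real.exp (ε * u E r / (2 * Δu)) ≤ Real.exp (ε / 2) * Real.exp (ε * u E' r / (2 * Δu)) := by
    intro E E' h r
    rw [← Real.exp_add]
    apply Real.exp_le_exp.2
    have h1 : u E r - u E' r ≤ Δu := le_trans (le_abs_self _) (hsens r E E' h)
    have h2 : ε * u E r / (2 * Δu) - ε * u E' r / (2 * Δu) = ε * (u E r - u E' r) / (2 * Δu) := by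
      ring
    have : ε * (u E r - u E' r) / (2 * Δu) ≤ ε * Δu / (2 * Δu) := by
      apply div_le_div_of_nonneg_right ?_ (by positivity) |>.trans_eq rfl
      exact mul_le_mul_of_nonneg_left h1 hε.le
    have h3 : ε * Δu / (2 * Δu) = ε / 2 := by field_simp
    linarith [h2 ▸ (h3 ▸ this)]
  have hN' : Neighbor D' D := by
    unfold Neighbor at *
    simpa [abs_sub_comm] using hN
  -- denominator comparison: S D' ≤ exp(ε/2) * S D
  have hden : S D' ≤ Real.exp (ε / 2) * S D := by
    rw [hS, Finset.mul_sum]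
    apply Finset.sum_le_sum
    intro r _
    rw [← mul_assoc]
    exact mul_le_mul_of_nonneg_right (key D' D hN' r) (hμ r).le
  -- numerator comparison
  have hnum : Real.exp (ε * u D t / (2 * Δu)) * μ t ≤
      Real.exp (ε / 2) * (Real.exp (ε * u D' t / (2 * Δu)) * μ t) := by
    rw [← mul_assoc]
    exact mul_le_mul_of_nonneg_right (key D D' hN t) (hμ t).le
  have hee : Real.exp (ε / 2) * Real.exp (ε / 2) = Real.exp ε := by
    rw [← Real.exp_add]; ring_nf
  rw [hP D t, hP D' t,
    show (∑ r, Real.exp (ε * u D r / (2 * Δu)) * μ r) = S D from rfl,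
    show (∑ r, Real.exp (ε * u D' r / (2 * Δu)) * μ r) = S D' from rfl,
    ← mul_div_assoc, div_le_div_iff₀ (hSpos D) (hSpos D')]
  calc Real.exp (ε * u D t / (2 * Δu)) * μ t * S D'
      ≤ Real.exp (ε / 2) * (Real.exp (ε * u D' t / (2 * Δu)) * μ t) *
        (Real.exp (ε / 2) * S D) := by
        exact mul_le_mul hnum hden (hSpos D').le
          (mul_nonneg (Real.exp_pos _).le (mul_nonneg (Real.exp_pos _).le (hμ t).le))
    _ = Real.exp ε * (Real.exp (ε * u D' t / (2 * Δu)) * μ t) * S D := by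
        rw [← hee]; ring
end

section
/- Backdoor attack-success-rate bound: if M is an ε-differentially private learner and ASR is a [0,1]-valued measurable function of the model (attack success rate), then for any dataset D̃ with at most x poisoned samples relative to D, E[ASR(M(D̃))] ≤ 1 − e^{−xε} · E[1 − ASR(M(D))]. -/
open MeasureTheory
open scoped ENNReal

/-- `ε`-differential privacy of a mechanism `M` with respect to a neighboring relation. -/
def IsDP {Dst Ω : Type*} [MeasurableSpace Ω] (Neighbor : Dst → Dst → Prop) (ε : ℝ)
    (M : Dst → Measure Ω) : Prop :=
  ∀ d d', Neighbor d d' → ∀ S : Set Ω, MeasurableSet S →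
    M d S ≤ ENNReal.ofReal (Real.exp ε) * M d' S

/-- Two datasets differ in at most `x` elements. -/
def DistLE {Dst : Type*} (Neighbor : Dst → Dst → Prop) (x : ℕ) (d d' : Dst) : Prop :=
  ∃ c : ℕ → Dst, c 0 = d ∧ c x = d' ∧ ∀ i < x, Neighbor (c i) (c (i + 1))

/-- Group privacy for sets along a chain. -/
lemma dp_chain {Dst Ω : Type*} [MeasurableSpace Ω] (Neighbor : Dst → Dst → Prop)
    (ε : ℝ) (M : Dst → Measure Ω) (hM : IsDP Neighbor ε M) :
    ∀ (n : ℕ) (c : ℕ → Dst), (∀ i < n, Neighbor (c i) (c (i + 1))) →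
      ∀ S : Set Ω, MeasurableSet S →
        M (c 0) S ≤ ENNReal.ofReal (Real.exp (n * ε)) * M (c n) S := by
  intro n
  induction n with
  | zero =>
    intro c _ S _
    simp
  | succ n ih =>
    intro c hc S hS
    have h1 : M (c 0) S ≤ ENNReal.ofReal (Real.exp (n * ε)) * M (c n) S :=
      ih c (fun i hi => hc i (Nat.lt_succ_of_lt hi)) S hS
    have h2 : M (c n) S ≤ ENNReal.ofReal (Real.exp ε) * M (c (n + 1)) S :=
      hM (c n) (c (n + 1)) (hc n (Nat.lt_succ_self n)) S hS
    calc M (c 0) S ≤ ENNReal.ofReal (Real.exp (n * ε)) * M (c n) S := h1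
      _ ≤ ENNReal.ofReal (Real.exp (n * ε)) *
          (ENNReal.ofReal (Real.exp ε) * M (c (n + 1)) S) := by
            exact mul_le_mul_right h2 _
      _ = ENNReal.ofReal (Real.exp ((((n + 1 : ℕ) : ℝ)) * ε)) * M (c (n + 1)) S := by
            rw [← mul_assoc, ← ENNReal.ofReal_mul (Real.exp_nonneg _),
              ← Real.exp_add]
            push_cast
            ring_nf

/-- Backdoor attack-success-rate bound: if `M` is an `ε`-differentially private learner and
`ASR` is a `[0,1]`-valued measurable function of the model, then for any dataset `D̃` with
at most `x` poisoned samples relative to `D`,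
`E[ASR(M(D̃))] ≤ 1 - e^{-xε}·E[1 - ASR(M(D))]`. -/
theorem backdoor_asr_bound {Dst Ω : Type*} [MeasurableSpace Ω]
    (Neighbor : Dst → Dst → Prop)
    (hsymm : ∀ d d', Neighbor d d' → Neighbor d' d)
    (ε : ℝ) (M : Dst → Measure Ω)
    (hP : ∀ d, IsProbabilityMeasure (M d))
    (hM : IsDP Neighbor ε M)
    (ASR : Ω → ℝ) (hmeas : Measurable ASR)
    (hrange : ∀ ω, ASR ω ∈ Set.Icc (0 : ℝ) 1)
    (x : ℕ) (D Dtilde : Dst) (hd : DistLE Neighbor x D Dtilde) :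
    ∫ ω, ASR ω ∂(M Dtilde) ≤ 1 - Real.exp (-(x * ε)) * ∫ ω, (1 - ASR ω) ∂(M D) := by
  obtain ⟨c, hc0, hcx, hnb⟩ := hd
  haveI := hP D; haveI := hP Dtilde
  set f : Ω → ℝ := fun ω => 1 - ASR ω with hf
  have hf0 : ∀ ω, 0 ≤ f ω := fun ω => by
    have := (hrange ω).2; simp [hf]; linarith
  have hf1 : ∀ ω, f ω ≤ 1 := fun ω => by
    have := (hrange ω).1; simp [hf]; linarith
  have hfm : Measurable f := measurable_const.sub hmeas
  -- integrability
  have hint : ∀ d, Integrable ASR (M d) := by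
    intro d
    refine (integrable_const (1 : ℝ)).mono' hmeas.aestronglyMeasurable ?_
    filter_upwards with ω
    have h1 := (hrange ω).1; have h2 := (hrange ω).2
    rw [Real.norm_eq_abs, abs_le]; constructor <;> linarith
  -- measure inequality
  have hle : M D ≤ ENNReal.ofReal (Real.exp (x * ε)) • M Dtilde := by
    rw [Measure.le_iff]
    intro S hS
    have := dp_chain Neighbor ε M hM x c hnb S hS
    rw [hc0, hcx] at this
    simpa using this
  -- lintegral formulation
  set g : Ω → ℝ≥0∞ := fun ω => ENNReal.ofReal (f ω) with hg
  have hgm : Measurable g := hfm.ennreal_ofReal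
  have hkeyL : ∫⁻ ω, g ω ∂(M D) ≤
      ENNReal.ofReal (Real.exp (x * ε)) * ∫⁻ ω, g ω ∂(M Dtilde) := by
    calc ∫⁻ ω, g ω ∂(M D)
        ≤ ∫⁻ ω, g ω ∂(ENNReal.ofReal (Real.exp (x * ε)) • M Dtilde) :=
          lintegral_mono' hle le_rfl
      _ = ENNReal.ofReal (Real.exp (x * ε)) * ∫⁻ ω, g ω ∂(M Dtilde) := by
          simp [lintegral_smul_measure]
  have hrepr : ∀ d, ∫ ω, f ω ∂(M d) = (∫⁻ ω, g ω ∂(M d)).toReal := fun d =>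
    integral_eq_lintegral_of_nonneg_ae (Filter.Eventually.of_forall hf0)
      hfm.aestronglyMeasurable
  have hfin : ∀ d, ∫⁻ ω, g ω ∂(M d) ≤ 1 := by
    intro d
    haveI := hP d
    calc ∫⁻ ω, g ω ∂(M d) ≤ ∫⁻ _, 1 ∂(M d) := by
          refine lintegral_mono fun ω => ?_
          simpa [hg] using ENNReal.ofReal_le_one.mpr (hf1 ω)
      _ = 1 := by simp
  have hkey : ∫ ω, f ω ∂(M D) ≤ Real.exp (x * ε) * ∫ ω, f ω ∂(M Dtilde) := by
    rw [hrepr D, hrepr Dtilde]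
    rw [← ENNReal.toReal_ofReal (Real.exp_nonneg (x * ε)), ← ENNReal.toReal_mul]
    refine ENNReal.toReal_mono ?_ hkeyL
    exact ENNReal.mul_ne_top ENNReal.ofReal_ne_top
      (lt_of_le_of_lt (hfin Dtilde) (by norm_num)).ne
  -- rewrite LHS
  have hsplit : ∫ ω, ASR ω ∂(M Dtilde) = 1 - ∫ ω, f ω ∂(M Dtilde) := by
    have : ∫ ω, f ω ∂(M Dtilde) = 1 - ∫ ω, ASR ω ∂(M Dtilde) := by
      rw [hf]
      rw [integral_sub (integrable_const 1) (hint Dtilde)]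
      simp
    linarith
  rw [hsplit]
  have hmul : Real.exp (-(x * ε)) * ∫ ω, f ω ∂(M D) ≤ ∫ ω, f ω ∂(M Dtilde) := by
    have hpos : (0:ℝ) < Real.exp (-(x * ε)) := Real.exp_pos _
    have := mul_le_mul_of_nonneg_left hkey hpos.le
    rwa [← mul_assoc, ← Real.exp_add, neg_add_cancel, Real.exp_zero, one_mul] at this
  linarith
end

section
/- Optimality of the binary-class sorted partition (Coppersmith–Hodges–Hong–Monma): for binary classification over a set of categories, among all 2-partitions of the categories, some partition minimizing the weighted Gini impurity is obtained by sorting categories by their proportion of class-1 samples and splitting the sorted order at some threshold; i.e., there exists an optimal partition that is a prefix/suffix of the sorted order. -/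
open Finset

set_option maxHeartbeats 1000000

/-- tangent-plane inequality for `g a b = a^2 / b` at a point with `b > 0`. -/
lemma CHHM.tangent_g (a b a' b' : ℝ) (hb : 0 < b) (hb' : 0 ≤ b') (hz : b' = 0 → a' = 0) :
    a^2/b + (2*a/b)*(a'-a) - (a/b)^2*(b'-b) ≤ a'^2/b' := by
  rcases eq_or_lt_of_le hb' with h0 | h0
  · have ha' : a' = 0 := hz h0.symm
    rw [← h0, ha']
    have : a^2/b + (2*a/b)*(0-a) - (a/b)^2*((0:ℝ)-b) = 0 := by
      field_simp; ring
    rw [this]; simp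
  · have key : a'^2/b' - (a^2/b + (2*a/b)*(a'-a) - (a/b)^2*(b'-b))
        = (a'*b - a*b')^2 / (b^2 * b') := by
      field_simp; ring
    nlinarith [div_nonneg (sq_nonneg (a'*b-a*b')) (le_of_lt (mul_pos (pow_pos hb 2) h0))]

lemma CHHM.scale_div (u a2 b2 : ℝ) (hu : 0 < u) (hb2 : 0 < b2) :
    (u*a2)^2 / (u*b2) = u*(a2^2/b2) := by
  field_simp

/-- convexity (secant) inequality for `g`. -/
lemma CHHM.secant_g (a1 b1 a2 b2 l u : ℝ) (hb1 : 0 ≤ b1) (hb2 : 0 ≤ b2)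
    (hz1 : b1 = 0 → a1 = 0) (hz2 : b2 = 0 → a2 = 0)
    (hl : 0 ≤ l) (hu : 0 ≤ u) (hlu : l + u = 1) :
    (l*a1 + u*a2)^2 / (l*b1 + u*b2) ≤ l*(a1^2/b1) + u*(a2^2/b2) := by
  rcases eq_or_lt_of_le hb1 with h1 | h1
  · have ha1 : a1 = 0 := hz1 h1.symm
    rw [ha1, ← h1]
    simp only [mul_zero, zero_add, add_zero, zero_pow, zero_div, ne_eq, OfNat.ofNat_ne_zero,
      not_false_eq_true]
    rcases eq_or_lt_of_le hb2 with h2 | h2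
    · rw [hz2 h2.symm, ← h2]; simp
    · rcases eq_or_lt_of_le hu with h3 | h3
      · rw [← h3]; simp
      · rw [CHHM.scale_div u a2 b2 h3 h2]
  · rcases eq_or_lt_of_le hb2 with h2 | h2
    · have ha2 : a2 = 0 := hz2 h2.symm
      rw [ha2, ← h2]
      simp only [mul_zero, zero_add, add_zero, zero_pow, zero_div, ne_eq, OfNat.ofNat_ne_zero,
        not_false_eq_true]
      rcases eq_or_lt_of_le hl with h3 | h3
      · rw [← h3]; simp
      · rw [CHHM.scale_div l a1 b1 h3 h1]
    · have hd : 0 < l*b1 + u*b2 := by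
        rcases eq_or_lt_of_le hl with h3 | h3
        · have hu1 : u = 1 := by linarith
          rw [← h3, hu1]; simpa using h2
        · have : 0 < l * b1 := mul_pos h3 h1
          nlinarith [mul_nonneg hu hb2]
      have key : l*(a1^2/b1) + u*(a2^2/b2) - (l*a1 + u*a2)^2 / (l*b1 + u*b2)
          = l*u*(a1*b2 - a2*b1)^2 / (b1*b2*(l*b1+u*b2)) := by
        field_simp; ring
      nlinarith [div_nonneg (mul_nonneg (mul_nonneg hl hu) (sq_nonneg (a1*b2-a2*b1)))
        (le_of_lt (mul_pos (mul_pos h1 h2) hd))]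

/-- algebraic identity relating the Gini form to `h = a²/b + (A-a)²/(N-b)`. -/
lemma CHHM.gini_alg (aL bL aR bR : ℝ) (hzL : bL = 0 → aL = 0) (hzR : bR = 0 → aR = 0)
    (hbL : 0 ≤ bL) (hbR : 0 ≤ bR) (hN : 0 < bL + bR) :
    (bL/(bL+bR)) * (1 - (aL/bL)^2 - (1-aL/bL)^2) + (bR/(bL+bR)) * (1 - (aR/bR)^2 - (1-aR/bR)^2)
      = (2/(bL+bR)) * ((aL+aR) - (aL^2/bL + aR^2/bR)) := by
  rcases eq_or_lt_of_le hbL with h1 | h1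
  · have haL := hzL h1.symm
    subst haL; rw [← h1]
    rcases eq_or_lt_of_le hbR with h2 | h2
    · exfalso; rw [← h1, ← h2] at hN; simp at hN
    · field_simp; ring
  · rcases eq_or_lt_of_le hbR with h2 | h2
    · have haR := hzR h2.symm
      subst haR; rw [← h2]
      field_simp; ring
    · field_simp; ring

lemma CHHM.pq_eq (a b A N : ℝ) (hb : 0<b) (hNb : 0<N-b) (h : a*(N-b) = (A-a)*b) :
    a^2/b + (A-a)^2/(N-b) = A^2/N := by
  have hN : 0 < N := by linarith
  field_simp
  ring_nf
  nlinarith [h, sq_nonneg (a*N - A*b)]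

/-- a down-closed subset of `Fin m` is a prefix. -/
lemma CHHM.downset_prefix {m : ℕ} (P : Fin m → Prop) [DecidablePred P]
    (hP : ∀ i j : Fin m, i ≤ j → P j → P i) :
    ∃ k : ℕ, univ.filter P = univ.filter (fun i : Fin m => (i : ℕ) < k) := by
  refine ⟨(univ.filter P).card, ?_⟩
  ext i
  simp only [mem_filter, mem_univ, true_and]
  constructor
  · intro hi
    have hsub : Finset.Iic i ⊆ univ.filter P := by
      intro j hj
      simp only [mem_Iic] at hj
      simp only [mem_filter, mem_univ, true_and]
      exact hP j i hj hi
    have := Finset.card_le_card hsub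
    rw [Fin.card_Iic] at this
    omega
  · intro hi
    by_contra hni
    have hsub : univ.filter P ⊆ Finset.Iio i := by
      intro j hj
      simp only [mem_filter, mem_univ, true_and] at hj
      simp only [mem_Iio]
      by_contra h
      push_neg at h
      exact hni (hP i j h hj)
    have := Finset.card_le_card hsub
    rw [Fin.card_Iio] at this
    omega

/-- the `h` functional on subsets of `Fin m`. -/
noncomputable def CHHM.Hf {m : ℕ} (w y : Fin m → ℝ) (S : Finset (Fin m)) : ℝ :=
  (∑ i ∈ S, y i) ^ 2 / (∑ i ∈ S, w i) +
    ((∑ i, y i) - ∑ i ∈ S, y i) ^ 2 / ((∑ i, w i) - ∑ i ∈ S, w i)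

namespace CHHM

section

variable {m : ℕ} (w y : Fin m → ℝ)

variable (hw : ∀ i, 0 < w i) (hy0 : ∀ i, 0 ≤ y i) (hyw : ∀ i, y i ≤ w i)

include hw in
lemma bS_nonneg (S : Finset (Fin m)) : 0 ≤ ∑ i ∈ S, w i :=
  Finset.sum_nonneg fun i _ => (hw i).le

include hy0 in
lemma aS_nonneg (S : Finset (Fin m)) : 0 ≤ ∑ i ∈ S, y i :=
  Finset.sum_nonneg fun i _ => hy0 i

include hyw in
lemma aS_le_bS (S : Finset (Fin m)) : ∑ i ∈ S, y i ≤ ∑ i ∈ S, w i :=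
  Finset.sum_le_sum fun i _ => hyw i

include hw in
lemma bS_le_N (S : Finset (Fin m)) : ∑ i ∈ S, w i ≤ ∑ i, w i :=
  Finset.sum_le_sum_of_subset_of_nonneg (Finset.subset_univ S) fun i _ _ => (hw i).le

include hy0 hyw in
lemma aS_zero (S : Finset (Fin m)) (h : ∑ i ∈ S, w i = 0) : ∑ i ∈ S, y i = 0 :=
  le_antisymm (h ▸ aS_le_bS w y hyw S) (aS_nonneg y hy0 S)

lemma compl_sum (S : Finset (Fin m)) (f : Fin m → ℝ) :
    ∑ i ∈ Sᶜ, f i = (∑ i, f i) - ∑ i ∈ S, f i := by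
  have := Finset.sum_add_sum_compl S f
  linarith

include hw hy0 hyw in
/-- Main lemma, "low side" case: if `S` is a global maximizer of `Hf` whose left
proportion is strictly smaller than its right proportion, then some prefix has
`Hf` value at least `Hf S`. -/
lemma lowside (hmono : Monotone fun i => y i / w i)
    (S : Finset (Fin m)) (hopt : ∀ T, Hf w y T ≤ Hf w y S)
    (hb : 0 < ∑ i ∈ S, w i) (hbN : ∑ i ∈ S, w i < ∑ i, w i)
    (hpq : (∑ i ∈ S, y i) / (∑ i ∈ S, w i)
        < ((∑ i, y i) - ∑ i ∈ S, y i) / ((∑ i, w i) - ∑ i ∈ S, w i)) :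
    ∃ k : ℕ, Hf w y S ≤ Hf w y (univ.filter fun i : Fin m => (i : ℕ) < k) := by
  set A := ∑ i, y i with hA
  set N := ∑ i, w i with hN
  set a := ∑ i ∈ S, y i with ha
  set b := ∑ i ∈ S, w i with hbb
  have hNb : 0 < N - b := by linarith
  set p := a / b with hp
  set q := (A - a) / (N - b) with hq
  have hpq' : p < q := hpq
  set θ := (p + q) / 2 with hθ
  -- claim 1 : members of S have ratio ≤ θ
  have claim1 : ∀ i ∈ S, 2 * y i ≤ (p + q) * w i := by
    intro i hi
    have hae : ∑ j ∈ S.erase i, y j = a - y i := by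
      have := Finset.sum_erase_add S y hi
      linarith
    have hbe : ∑ j ∈ S.erase i, w j = b - w i := by
      have := Finset.sum_erase_add S w hi
      linarith
    have hbe0 : 0 ≤ b - w i := hbe ▸ bS_nonneg w hw _
    have hze : b - w i = 0 → a - y i = 0 := by
      intro h0
      rw [← hae]
      exact aS_zero w y hy0 hyw _ (hbe.trans h0)
    have t1 := tangent_g a b (a - y i) (b - w i) hb hbe0 hze
    have t2 := tangent_g (A - a) (N - b) (A - (a - y i)) (N - (b - w i)) hNb
      (by nlinarith [hw i]) (by intro h; nlinarith [hw i])
    have hHe : Hf w y (S.erase i) = (a - y i)^2 / (b - w i)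
        + (A - (a - y i))^2 / (N - (b - w i)) := by
      rw [Hf, hae, hbe]
    have hopt' := hopt (S.erase i)
    have hHS : Hf w y S = a^2/b + (A-a)^2/(N-b) := rfl
    rw [hHe, hHS] at hopt'
    have hwi := hw i
    have expand1 : a^2/b + (2*a/b)*((a - y i)-a) - (a/b)^2*((b - w i)-b)
        = a^2/b - 2*p*(y i) + p^2*(w i) := by
      rw [hp]; ring
    have expand2 : (A-a)^2/(N-b) + (2*(A-a)/(N-b))*((A - (a - y i))-(A-a))
        - ((A-a)/(N-b))^2*((N - (b - w i))-(N-b))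
        = (A-a)^2/(N-b) + 2*q*(y i) - q^2*(w i) := by
      rw [hq]; ring
    rw [expand1] at t1
    rw [expand2] at t2
    have hsum : 2*(q-p)*(y i) + (p^2 - q^2)*(w i) ≤ 0 := by linarith only [t1, t2, hopt']
    by_contra hcon
    push_neg at hcon
    have hprod := mul_pos (sub_pos.mpr hpq') (sub_pos.mpr hcon)
    linarith only [hsum, hprod]
  -- claim 2 : non-members have ratio ≥ θ
  have claim2 : ∀ j ∉ S, (p + q) * w j ≤ 2 * y j := by
    intro j hj
    have hae : ∑ i ∈ insert j S, y i = a + y j := by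
      rw [Finset.sum_insert hj]; ring
    have hbe : ∑ i ∈ insert j S, w i = b + w j := by
      rw [Finset.sum_insert hj]; ring
    have hNbw : 0 ≤ N - (b + w j) := by
      have : ∑ i ∈ insert j S, w i ≤ N := bS_le_N w hw _
      rw [hbe] at this; linarith
    have hze : N - (b + w j) = 0 → A - (a + y j) = 0 := by
      intro h0
      have e1 : ∑ i ∈ (insert j S)ᶜ, w i = N - (b + w j) := by
        rw [compl_sum, hbe]
      have e2 : ∑ i ∈ (insert j S)ᶜ, y i = A - (a + y j) := by
        rw [compl_sum, hae]
      rw [← e2]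
      exact aS_zero w y hy0 hyw _ (e1.trans h0)
    have t1 := tangent_g a b (a + y j) (b + w j) hb (by nlinarith [hw j]) (by intro h; nlinarith [hw j])
    have t2 := tangent_g (A - a) (N - b) (A - (a + y j)) (N - (b + w j)) hNb hNbw hze
    have hHe : Hf w y (insert j S) = (a + y j)^2 / (b + w j)
        + (A - (a + y j))^2 / (N - (b + w j)) := by
      rw [Hf, hae, hbe]
    have hopt' := hopt (insert j S)
    have hHS : Hf w y S = a^2/b + (A-a)^2/(N-b) := rfl
    rw [hHe, hHS] at hopt'
    have hwj := hw j
    have expand1 : a^2/b + (2*a/b)*((a + y j)-a) - (a/b)^2*((b + w j)-b)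
        = a^2/b + 2*p*(y j) - p^2*(w j) := by
      rw [hp]; ring
    have expand2 : (A-a)^2/(N-b) + (2*(A-a)/(N-b))*((A - (a + y j))-(A-a))
        - ((A-a)/(N-b))^2*((N - (b + w j))-(N-b))
        = (A-a)^2/(N-b) - 2*q*(y j) + q^2*(w j) := by
      rw [hq]; ring
    rw [expand1] at t1
    rw [expand2] at t2
    have hsum : 2*(p-q)*(y j) + (q^2 - p^2)*(w j) ≤ 0 := by linarith only [t1, t2, hopt']
    by_contra hcon
    push_neg at hcon
    have hprod := mul_pos (sub_pos.mpr hpq') (sub_pos.mpr hcon)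
    linarith only [hsum, hprod]
  -- define LT and LE
  set LT := univ.filter (fun i : Fin m => y i / w i < θ) with hLT
  set LE := univ.filter (fun i : Fin m => y i / w i ≤ θ) with hLE
  have hLTsub : LT ⊆ LE := by
    intro i hi
    simp only [hLT, hLE, mem_filter, mem_univ, true_and] at hi ⊢
    exact hi.le
  have hLTS : LT ⊆ S := by
    intro i hi
    simp only [hLT, mem_filter, mem_univ, true_and] at hi
    by_contra hiS
    have := claim2 i hiS
    have hwi := hw i
    have : θ ≤ y i / w i := by
      rw [le_div_iff₀ hwi]; rw [hθ]; linarith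
    linarith
  have hSLE : S ⊆ LE := by
    intro i hi
    simp only [hLE, mem_filter, mem_univ, true_and]
    have := claim1 i hi
    have hwi := hw i
    rw [div_le_iff₀ hwi, hθ]; linarith
  -- prefix structure of LT and LE
  obtain ⟨k1, hk1⟩ := downset_prefix (fun i : Fin m => y i / w i < θ)
    (fun i j hij hj => lt_of_le_of_lt (hmono hij) hj)
  obtain ⟨k2, hk2⟩ := downset_prefix (fun i : Fin m => y i / w i ≤ θ)
    (fun i j hij hj => le_trans (hmono hij) hj)
  -- ratio = θ on the tie region, giving the linear relation
  have tie : ∀ i, i ∈ LE → i ∉ LT → y i = θ * w i := by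
    intro i h1 h2
    simp only [hLE, hLT, mem_filter, mem_univ, true_and, not_lt] at h1 h2
    have : y i / w i = θ := le_antisymm h1 h2
    rw [← this, div_mul_cancel₀ _ (hw i).ne']
  have sum_tie : ∀ T U : Finset (Fin m), T ⊆ U → U ⊆ LE → LT ⊆ T →
      (∑ i ∈ U, y i) - (∑ i ∈ T, y i) = θ * ((∑ i ∈ U, w i) - ∑ i ∈ T, w i) := by
    intro T U hTU hULE hLTT
    rw [← Finset.sum_sdiff hTU, ← Finset.sum_sdiff hTU (f := w)]
    have : ∀ i ∈ U \ T, y i = θ * w i := by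
      intro i hi
      rw [Finset.mem_sdiff] at hi
      exact tie i (hULE hi.1) (fun h => hi.2 (hLTT h))
    rw [Finset.sum_congr rfl this, ← Finset.mul_sum]
    ring
  set aLT := ∑ i ∈ LT, y i
  set bLT := ∑ i ∈ LT, w i
  set aLE := ∑ i ∈ LE, y i
  set bLE := ∑ i ∈ LE, w i
  have rel1 : a - aLT = θ * (b - bLT) := sum_tie LT S hLTS hSLE (subset_refl LT)
  have rel2 : aLE - a = θ * (bLE - b) := by
    have := sum_tie S LE hSLE (subset_refl LE) hLTS
    linarith [this]
  have hbmono1 : bLT ≤ b := Finset.sum_le_sum_of_subset_of_nonneg hLTS fun i _ _ => (hw i).le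
  have hbmono2 : b ≤ bLE := Finset.sum_le_sum_of_subset_of_nonneg hSLE fun i _ _ => (hw i).le
  rcases eq_or_lt_of_le (le_trans hbmono1 hbmono2) with heq | hlt
  · -- bLT = bLE hence S = LT
    have hSLT : S = LT := by
      have h0 : ∑ i ∈ S \ LT, w i = 0 := by
        rw [Finset.sum_sdiff_eq_sub hLTS]
        have : b ≤ bLT := by linarith
        linarith
      have : S \ LT = ∅ := by
        by_contra hne
        obtain ⟨i, hi⟩ := Finset.nonempty_iff_ne_empty.mpr hne
        have : 0 < ∑ i ∈ S \ LT, w i :=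
          Finset.sum_pos' (fun j _ => (hw j).le) ⟨i, hi, hw i⟩
        linarith
      have := Finset.sdiff_eq_empty_iff_subset.mp this
      exact le_antisymm this hLTS
    refine ⟨k1, ?_⟩
    rw [hSLT, hLT, hk1]
  · -- bLT < bLE : S is a convex combination of LT and LE
    set l := (bLE - b) / (bLE - bLT) with hl
    set u := (b - bLT) / (bLE - bLT) with hu
    have hd : (0:ℝ) < bLE - bLT := by linarith
    have hl0 : 0 ≤ l := div_nonneg (by linarith) hd.le
    have hu0 : 0 ≤ u := div_nonneg (by linarith) hd.le
    have hlu : l + u = 1 := by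
      rw [hl, hu, ← add_div, div_eq_one_iff_eq hd.ne']
      ring
    have hbcomb : b = l * bLT + u * bLE := by
      rw [hl, hu]
      field_simp
      ring
    have hacomb : a = l * aLT + u * aLE := by
      have e1 : aLE - aLT = θ * (bLE - bLT) := by linarith
      have : a = aLT + θ * (b - bLT) := by linarith
      rw [this, hl, hu]
      have haLE : aLE = aLT + θ * (bLE - bLT) := by linarith
      rw [haLE]
      field_simp
      ring
    -- apply secant to both terms
    have hbLT0 : 0 ≤ bLT := bS_nonneg w hw LT
    have hzLT : bLT = 0 → aLT = 0 := aS_zero w y hy0 hyw LT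
    have hbLE0 : 0 ≤ bLE := bS_nonneg w hw LE
    have hzLE : bLE = 0 → aLE = 0 := aS_zero w y hy0 hyw LE
    have hNLE : 0 ≤ N - bLE := by
      have := bS_le_N w hw LE
      linarith [this]
    have hNLT : 0 ≤ N - bLT := by linarith
    have hzNLE : N - bLE = 0 → A - aLE = 0 := by
      intro h0
      have e1 : ∑ i ∈ LEᶜ, w i = N - bLE := by rw [compl_sum]
      have e2 : ∑ i ∈ LEᶜ, y i = A - aLE := by rw [compl_sum]
      rw [← e2]
      exact aS_zero w y hy0 hyw _ (e1.trans h0)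
    have hzNLT : N - bLT = 0 → A - aLT = 0 := by
      intro h0
      have e1 : ∑ i ∈ LTᶜ, w i = N - bLT := by rw [compl_sum]
      have e2 : ∑ i ∈ LTᶜ, y i = A - aLT := by rw [compl_sum]
      rw [← e2]
      exact aS_zero w y hy0 hyw _ (e1.trans h0)
    have sec1 := secant_g aLT bLT aLE bLE l u hbLT0 hbLE0 hzLT hzLE hl0 hu0 hlu
    have sec2 := secant_g (A - aLT) (N - bLT) (A - aLE) (N - bLE) l u hNLT hNLE
      hzNLT hzNLE hl0 hu0 hlu
    have hflip1 : A - a = l * (A - aLT) + u * (A - aLE) := by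
      linear_combination (-A) * hlu - hacomb
    have hflip2 : N - b = l * (N - bLT) + u * (N - bLE) := by
      linear_combination (-N) * hlu - hbcomb
    have hHS : Hf w y S = a^2/b + (A-a)^2/(N-b) := rfl
    have hHLT : Hf w y LT = aLT^2/bLT + (A-aLT)^2/(N-bLT) := rfl
    have hHLE : Hf w y LE = aLE^2/bLE + (A-aLE)^2/(N-bLE) := rfl
    have hcomb : Hf w y S ≤ l * Hf w y LT + u * Hf w y LE := by
      rw [hHS, hHLT, hHLE, hflip1, hflip2, hacomb, hbcomb]
      calc (l * aLT + u * aLE)^2 / (l * bLT + u * bLE)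
            + (l * (A - aLT) + u * (A - aLE))^2 / (l * (N - bLT) + u * (N - bLE))
          ≤ (l*(aLT^2/bLT) + u*(aLE^2/bLE))
            + (l*((A-aLT)^2/(N-bLT)) + u*((A-aLE)^2/(N-bLE))) := add_le_add sec1 sec2
        _ = l * (aLT^2/bLT + (A-aLT)^2/(N-bLT)) + u * (aLE^2/bLE + (A-aLE)^2/(N-bLE)) := by ring
    rcases le_total (Hf w y LT) (Hf w y LE) with hc | hc
    · refine ⟨k2, ?_⟩
      have hfin : Hf w y S ≤ Hf w y LE := by
        calc Hf w y S ≤ l * Hf w y LT + u * Hf w y LE := hcomb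
          _ ≤ l * Hf w y LE + u * Hf w y LE :=
              add_le_add_left (mul_le_mul_of_nonneg_left hc hl0) _
          _ = Hf w y LE := by rw [← add_mul, hlu, one_mul]
      rw [hLE, hk2] at hfin
      exact hfin
    · refine ⟨k1, ?_⟩
      have hfin : Hf w y S ≤ Hf w y LT := by
        calc Hf w y S ≤ l * Hf w y LT + u * Hf w y LE := hcomb
          _ ≤ l * Hf w y LT + u * Hf w y LT :=
              add_le_add_right (mul_le_mul_of_nonneg_left hc hu0) _
          _ = Hf w y LT := by rw [← add_mul, hlu, one_mul]
      rw [hLT, hk1] at hfin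
      exact hfin

end

end CHHM

namespace CHHM

theorem mainFin {m : ℕ} (w y : Fin m → ℝ)
    (hw : ∀ i, 0 < w i) (hy0 : ∀ i, 0 ≤ y i) (hyw : ∀ i, y i ≤ w i)
    (hmono : Monotone fun i => y i / w i) :
    ∃ k : ℕ, ∀ S : Finset (Fin m),
      Hf w y S ≤ Hf w y (univ.filter fun i : Fin m => (i : ℕ) < k) := by
  obtain ⟨S0, -, hmax⟩ := Finset.exists_max_image (univ : Finset (Finset (Fin m))) (Hf w y)
    ⟨∅, mem_univ _⟩
  have hopt : ∀ T, Hf w y T ≤ Hf w y S0 := fun T => hmax T (mem_univ T)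
  suffices h : ∃ k : ℕ, Hf w y S0 ≤ Hf w y (univ.filter fun i : Fin m => (i : ℕ) < k) by
    obtain ⟨k, hk⟩ := h
    exact ⟨k, fun S => le_trans (hopt S) hk⟩
  have prefix0 : (univ.filter fun i : Fin m => (i : ℕ) < 0) = ∅ := by
    ext i; simp
  rcases eq_or_lt_of_le (bS_nonneg w hw S0) with hb0 | hb0
  · refine ⟨0, le_of_eq ?_⟩
    have ha0 : ∑ i ∈ S0, y i = 0 := aS_zero w y hy0 hyw S0 hb0.symm
    rw [prefix0, Hf, Hf, Finset.sum_empty, Finset.sum_empty, ha0, ← hb0]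
  · rcases eq_or_lt_of_le (bS_le_N w hw S0) with hbN | hbN
    · -- S0 = univ
      have hS0 : S0 = univ := by
        rw [Finset.eq_univ_iff_forall]
        intro i
        by_contra hi
        have hmem : i ∈ S0ᶜ := Finset.mem_compl.mpr hi
        have h1 : w i ≤ ∑ j ∈ S0ᶜ, w j :=
          Finset.single_le_sum (fun j _ => (hw j).le) hmem
        rw [compl_sum, ← hbN] at h1
        linarith [hw i]
      have prefixm : (univ.filter fun i : Fin m => (i : ℕ) < m) = univ := by
        ext i; simpa using i.isLt
      exact ⟨m, le_of_eq (by rw [hS0, prefixm])⟩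
    · set A := ∑ i, y i with hA
      set N := ∑ i, w i with hN
      set a := ∑ i ∈ S0, y i with ha
      set b := ∑ i ∈ S0, w i with hb
      have hNb : 0 < N - b := by linarith
      rcases lt_trichotomy (a / b) ((A - a) / (N - b)) with h | h | h
      · exact lowside w y hw hy0 hyw hmono S0 hopt hb0 hbN h
      · -- equal proportions : Hf S0 = A^2/N = Hf ∅
        refine ⟨0, le_of_eq ?_⟩
        have hcross : a * (N - b) = (A - a) * b := by
          rw [div_eq_div_iff hb0.ne' hNb.ne'] at h
          linarith [h]
        have h1 : Hf w y S0 = A^2/N := pq_eq a b A N hb0 hNb hcross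
        have h2 : Hf w y (univ.filter fun i : Fin m => (i : ℕ) < 0) = A^2/N := by
          rw [prefix0, Hf, Finset.sum_empty]
          norm_num
          rfl
        rw [h1, h2]
      · -- complement has low side
        have hcompl : Hf w y S0ᶜ = Hf w y S0 := by
          rw [Hf, Hf, compl_sum, compl_sum, ← hA, ← hN, ← ha, ← hb]
          have e1 : A - (A - a) = a := by ring
          have e2 : N - (N - b) = b := by ring
          rw [e1, e2]
          ring
        have hopt' : ∀ T, Hf w y T ≤ Hf w y S0ᶜ := fun T => (hopt T).trans_eq hcompl.symm
        have hbc : 0 < ∑ i ∈ S0ᶜ, w i := by rw [compl_sum, ← hN, ← hb]; linarith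
        have hbNc : ∑ i ∈ S0ᶜ, w i < ∑ i, w i := by rw [compl_sum, ← hN, ← hb]; linarith
        have hpqc : (∑ i ∈ S0ᶜ, y i) / (∑ i ∈ S0ᶜ, w i)
            < ((∑ i, y i) - ∑ i ∈ S0ᶜ, y i) / ((∑ i, w i) - ∑ i ∈ S0ᶜ, w i) := by
          rw [compl_sum, compl_sum, ← hA, ← hN, ← ha, ← hb]
          have e1 : A - (A - a) = a := by ring
          have e2 : N - (N - b) = b := by ring
          rw [e1, e2]
          exact h
        obtain ⟨k, hk⟩ := lowside w y hw hy0 hyw hmono S0ᶜ hopt' hbc hbNc hpqc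
        exact ⟨k, hcompl ▸ hk⟩

end CHHM

/-- Weighted Gini impurity of the 2-partition `(L, Lᶜ)` of categories, where category `c`
has `n0 c` class-0 samples and `n1 c` class-1 samples. -/
noncomputable def giniImpurity {C : Type*} [Fintype C] [DecidableEq C]
    (n0 n1 : C → ℕ) (L : Finset C) : ℝ :=
  let NL : ℝ := ∑ c ∈ L, ((n0 c : ℝ) + n1 c)
  let NR : ℝ := ∑ c ∈ Lᶜ, ((n0 c : ℝ) + n1 c)
  let N : ℝ := NL + NR
  let pL : ℝ := (∑ c ∈ L, (n1 c : ℝ)) / NL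
  let pR : ℝ := (∑ c ∈ Lᶜ, (n1 c : ℝ)) / NR
  (NL / N) * (1 - pL ^ 2 - (1 - pL) ^ 2) + (NR / N) * (1 - pR ^ 2 - (1 - pR) ^ 2)

namespace CHHM

lemma image_compl {C : Type*} [Fintype C] [DecidableEq C] {m : ℕ} (e : Fin m ≃ C)
    (S : Finset (Fin m)) : (S.image e)ᶜ = Sᶜ.image e := by
  ext c
  simp only [Finset.mem_compl, Finset.mem_image]
  constructor
  · intro h
    refine ⟨e.symm c, ?_, e.apply_symm_apply c⟩
    intro hmem
    exact h ⟨e.symm c, hmem, e.apply_symm_apply c⟩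
  · rintro ⟨i, hi, rfl⟩ ⟨j, hj, hje⟩
    exact hi (e.injective hje ▸ hj)

lemma gini_eq_Hf {C : Type*} [Fintype C] [DecidableEq C]
    (n0 n1 : C → ℕ) (hpos : ∀ c, 0 < n0 c + n1 c) {m : ℕ} (e : Fin m ≃ C)
    (hm : 0 < m) (S : Finset (Fin m)) :
    giniImpurity n0 n1 (S.image e)
      = (2 / ∑ i : Fin m, ((n0 (e i) : ℝ) + n1 (e i)))
        * ((∑ i : Fin m, (n1 (e i) : ℝ))
          - Hf (fun i => (n0 (e i) : ℝ) + n1 (e i)) (fun i => (n1 (e i) : ℝ)) S) := by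
  set w : Fin m → ℝ := fun i => (n0 (e i) : ℝ) + n1 (e i) with hwdef
  set y : Fin m → ℝ := fun i => (n1 (e i) : ℝ) with hydef
  have hw : ∀ i, 0 < w i := by
    intro i
    have := hpos (e i)
    have h2 : (0:ℝ) < (n0 (e i):ℝ) + n1 (e i) := by exact_mod_cast this
    exact h2
  have hy0 : ∀ i, 0 ≤ y i := fun i => by rw [hydef]; positivity
  have hyw : ∀ i, y i ≤ w i := fun i => by simp [hwdef, hydef]
  have hinj : ∀ x ∈ S, ∀ z ∈ S, e x = e z → x = z := fun x _ z _ h => e.injective h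
  have hinjc : ∀ x ∈ Sᶜ, ∀ z ∈ Sᶜ, e x = e z → x = z := fun x _ z _ h => e.injective h
  have s1 : ∑ c ∈ S.image e, ((n0 c : ℝ) + n1 c) = ∑ i ∈ S, w i := Finset.sum_image hinj
  have s2 : ∑ c ∈ S.image e, (n1 c : ℝ) = ∑ i ∈ S, y i := Finset.sum_image hinj
  have s3 : ∑ c ∈ (S.image e)ᶜ, ((n0 c : ℝ) + n1 c) = ∑ i ∈ Sᶜ, w i := by
    rw [image_compl]; exact Finset.sum_image hinjc
  have s4 : ∑ c ∈ (S.image e)ᶜ, (n1 c : ℝ) = ∑ i ∈ Sᶜ, y i := by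
    rw [image_compl]; exact Finset.sum_image hinjc
  set aL := ∑ i ∈ S, y i
  set bL := ∑ i ∈ S, w i
  set aR := ∑ i ∈ Sᶜ, y i
  set bR := ∑ i ∈ Sᶜ, w i
  have hNsplit : ∑ i : Fin m, w i = bL + bR := (Finset.sum_add_sum_compl S w).symm
  have hAsplit : ∑ i : Fin m, y i = aL + aR := (Finset.sum_add_sum_compl S y).symm
  have hzL : bL = 0 → aL = 0 := aS_zero w y hy0 hyw S
  have hzR : bR = 0 → aR = 0 := aS_zero w y hy0 hyw Sᶜ
  have hbL : 0 ≤ bL := bS_nonneg w hw S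
  have hbR : 0 ≤ bR := bS_nonneg w hw Sᶜ
  have hNpos : 0 < bL + bR := by
    rw [← hNsplit]
    exact Finset.sum_pos (fun i _ => hw i) (Finset.univ_nonempty_iff.mpr ⟨⟨0, hm⟩⟩)
  have hHf : Hf w y S = aL^2/bL + aR^2/bR := by
    rw [Hf, hNsplit, hAsplit]
    have e1 : aL + aR - aL = aR := by ring
    have e2 : bL + bR - bL = bR := by ring
    rw [e1, e2]
  rw [giniImpurity]
  simp only [s1, s2, s3, s4]
  rw [hNsplit, hAsplit, hHf]
  exact gini_alg aL bL aR bR hzL hzR hbL hbR hNpos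

end CHHM

/-- Coppersmith–Hodges–Hong–Monma: for binary classification over a set of categories,
some 2-partition minimizing the weighted Gini impurity is an initial segment of the
order sorting categories by their proportion of class-1 samples. -/
theorem sorted_prefix_partition_optimal {C : Type*} [Fintype C] [DecidableEq C]
    (n0 n1 : C → ℕ) (hpos : ∀ c, 0 < n0 c + n1 c)
    (m : ℕ) (e : Fin m ≃ C)
    (hsorted : Monotone fun i : Fin m =>
      (n1 (e i) : ℝ) / ((n0 (e i) : ℝ) + n1 (e i))) :
    ∃ k : ℕ, ∀ L : Finset C,
      giniImpurity n0 n1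
          ((Finset.univ.filter fun i : Fin m => (i : ℕ) < k).image fun i => e i)
        ≤ giniImpurity n0 n1 L := by
  rcases Nat.eq_zero_or_pos m with hm | hm
  · -- C is empty : everything is trivial
    subst hm
    have hempty : ∀ T : Finset C, T = ∅ := by
      intro T
      apply Finset.eq_empty_of_forall_notMem
      intro c _
      exact (e.symm c).elim0
    refine ⟨0, fun L => ?_⟩
    rw [hempty L, hempty ((Finset.univ.filter fun i : Fin 0 => (i : ℕ) < 0).image fun i => e i)]
  · set w : Fin m → ℝ := fun i => (n0 (e i) : ℝ) + n1 (e i) with hwdef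
    set y : Fin m → ℝ := fun i => (n1 (e i) : ℝ) with hydef
    have hw : ∀ i, 0 < w i := by
      intro i
      have := hpos (e i)
      have h2 : (0:ℝ) < (n0 (e i):ℝ) + n1 (e i) := by exact_mod_cast this
      exact h2
    have hy0 : ∀ i, 0 ≤ y i := fun i => by rw [hydef]; positivity
    have hyw : ∀ i, y i ≤ w i := fun i => by simp [hwdef, hydef]
    obtain ⟨k, hk⟩ := CHHM.mainFin w y hw hy0 hyw hsorted
    refine ⟨k, fun L => ?_⟩
    set SL : Finset (Fin m) := Finset.univ.filter (fun i => e i ∈ L) with hSL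
    have hLimg : SL.image e = L := by
      ext c
      simp only [hSL, Finset.mem_image, Finset.mem_filter, Finset.mem_univ, true_and]
      constructor
      · rintro ⟨i, hi, rfl⟩; exact hi
      · intro h; exact ⟨e.symm c, by simpa using h, e.apply_symm_apply c⟩
    have g1 := CHHM.gini_eq_Hf n0 n1 hpos e hm SL
    have g2 := CHHM.gini_eq_Hf n0 n1 hpos e hm
      (Finset.univ.filter fun i : Fin m => (i : ℕ) < k)
    rw [hLimg] at g1
    have hNpos : 0 < ∑ i : Fin m, w i :=
      Finset.sum_pos (fun i _ => hw i) (Finset.univ_nonempty_iff.mpr ⟨⟨0, hm⟩⟩)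
    have h2N : 0 < 2 / ∑ i : Fin m, w i := by positivity
    have hle := hk SL
    calc giniImpurity n0 n1 ((Finset.univ.filter fun i : Fin m => (i : ℕ) < k).image fun i => e i)
        = (2 / ∑ i : Fin m, w i) * ((∑ i : Fin m, y i)
            - CHHM.Hf w y (Finset.univ.filter fun i : Fin m => (i : ℕ) < k)) := g2
      _ ≤ (2 / ∑ i : Fin m, w i) * ((∑ i : Fin m, y i) - CHHM.Hf w y SL) :=
          mul_le_mul_of_nonneg_left (by linarith) h2N.le
      _ = giniImpurity n0 n1 L := g1.symm
end
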